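/- arXiv:q-alg/9605021 — 2 statements merged into one kernel-verified Lean document; each statement's English description precedes it below -/
import Mathlib

section
/- Fix an integer n ≥ 1 and define y_k := (2k+2)! · c_{2k} / (4^k · (2n+1)) for every k ≥ 0. Then y_0 = 2/(2n+1) and, for every k ≥ 1, k · y_k = −Σ_{p=0}^{k−1} y_p · ((2k+2)!/4) / ((2p+2)! · (2k−2p+1)!) · ((2k−2p−1)(2n−2p+1) + 2p(2k−2p+1)). (The same coefficients satisfy both recursion relations arising from the two different reorderings.) -/
open scoped BigOperators
open Nat PowerSeries

noncomputable section

/-- The formal power series `sinh u = Σ u^{2j+1}/(2j+1)!`. -/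
def sinhS : PowerSeries ℚ := PowerSeries.mk fun m => if m % 2 = 1 then (1:ℚ)/(m)! else 0

/-- The formal power series `h = sinh(u)/u = Σ u^{2j}/(2j+1)!` (constant term 1, invertible). -/
def hS : PowerSeries ℚ := PowerSeries.mk fun m => if m % 2 = 0 then (1:ℚ)/(m+1)! else 0

/-- `c_m`, the coefficient of `u^m` in `(u/sinh u)^{2n+1} = (h⁻¹)^{2n+1}`. -/
def ccoef (n m : ℕ) : ℚ := PowerSeries.coeff (R := ℚ) m ((hS⁻¹)^(2*n+1))

/-- `y_k = (2k+2)! c_{2k} / (4^k (2n+1))`. -/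
def ycoef (n k : ℕ) : ℚ := (((2*k+2))! : ℚ) * ccoef n (2*k) / (4^k * (2*(n:ℚ)+1))

namespace Aux

/-- The operator `u d/du` on power series. -/
def th (f : ℚ⟦X⟧) : ℚ⟦X⟧ := PowerSeries.mk fun m => (m : ℚ) * PowerSeries.coeff m f

@[simp] lemma coeff_th (m : ℕ) (f : ℚ⟦X⟧) : coeff m (th f) = (m:ℚ) * coeff m f := by
  simp [th]

lemma th_mul (a b : ℚ⟦X⟧) : th (a*b) = th a * b + a * th b := by
  ext m
  simp only [coeff_th, coeff_mul, map_add, Finset.mul_sum, ← Finset.sum_add_distrib]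
  refine Finset.sum_congr rfl fun x hx => ?_
  have h := Finset.HasAntidiagonal.mem_antidiagonal.mp hx
  have : (m:ℚ) = (x.1:ℚ) + x.2 := by exact_mod_cast congrArg (Nat.cast (R:=ℚ)) h.symm
  rw [this]; ring

@[simp] lemma th_one : th (1 : ℚ⟦X⟧) = 0 := by
  ext m
  rcases m with _|m <;> simp [th, coeff_one]

lemma th_rescale (a : ℚ) (f : ℚ⟦X⟧) : th (rescale a f) = rescale a (th f) := by
  ext m; simp [coeff_rescale]; ring

lemma th_pow (a : ℚ⟦X⟧) (N : ℕ) : th (a^(N+1)) = (N+1 : ℚ⟦X⟧) * (a^N * th a) := by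
  induction N with
  | zero => simp [th_mul]
  | succ N ih =>
    rw [pow_succ, th_mul, ih]
    push_cast
    ring


/-- cosh series -/
def Cc : ℚ⟦X⟧ := PowerSeries.mk fun m => if m % 2 = 0 then (1:ℚ)/(m)! else 0

def Ee : ℚ⟦X⟧ := PowerSeries.exp ℚ
def Em : ℚ⟦X⟧ := rescale (-1) (PowerSeries.exp ℚ)

lemma coeff_Ee (m : ℕ) : coeff m Ee = 1/(m)! := by
  simp [Ee, coeff_exp]

lemma coeff_Em (m : ℕ) : coeff m Em = (-1)^m * (1/(m)!) := by
  simp [Em, coeff_rescale, coeff_exp]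

lemma two_eq_C : (2 : ℚ⟦X⟧) = C 2 := (map_ofNat _ 2).symm

lemma coeff_two_mul (m : ℕ) (f : ℚ⟦X⟧) : coeff m (2*f) = 2 * coeff m f := by
  rw [two_eq_C, coeff_C_mul]

lemma twoS : 2 * sinhS = Ee - Em := by
  ext m
  rw [coeff_two_mul, map_sub, coeff_Ee, coeff_Em]
  rcases Nat.even_or_odd m with h | h
  · simp [sinhS, Nat.even_iff.mp h, h.neg_one_pow]
  · simp [sinhS, Nat.odd_iff.mp h, h.neg_one_pow]; ring

lemma twoC : 2 * Cc = Ee + Em := by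
  ext m
  rw [coeff_two_mul, map_add, coeff_Ee, coeff_Em]
  rcases Nat.even_or_odd m with h | h
  · simp [Cc, Nat.even_iff.mp h, h.neg_one_pow]; ring
  · simp [Cc, Nat.odd_iff.mp h, h.neg_one_pow]

lemma EeEm : Ee * Em = 1 := by
  have h := PowerSeries.exp_mul_exp_eq_exp_add (1:ℚ) (-1)
  simp only [rescale_one, RingHom.id_apply, add_neg_cancel, rescale_zero] at h
  rw [Ee, Em, h]
  simp

lemma rescale_C (b a : ℚ) : rescale b (C a) = C a := by
  ext m
  rcases m with _|m <;> simp [coeff_rescale]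

lemma resc2Ee : rescale 2 Ee = Ee * Ee := by
  have h := PowerSeries.exp_mul_exp_eq_exp_add (1:ℚ) 1
  norm_num at h
  rw [Ee, ← h]

lemma resc2Em : rescale 2 Em = Em * Em := by
  have h := PowerSeries.exp_mul_exp_eq_exp_add (-1:ℚ) (-1)
  norm_num at h
  rw [Em, rescale_rescale, show (-1*2 : ℚ) = -2 by norm_num, ← h]

lemma Pkey : sinhS * rescale 2 Cc - Cc * rescale 2 sinhS + sinhS = 0 := by
  have h4 : (4:ℚ⟦X⟧) * (sinhS * rescale 2 Cc - Cc * rescale 2 sinhS + sinhS) = 0 := by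
    have e1 : (2:ℚ⟦X⟧) * rescale 2 Cc = Ee*Ee + Em*Em := by
      rw [← resc2Ee, ← resc2Em, ← map_add, ← twoC, map_mul]
      congr 1
      rw [two_eq_C, rescale_C]
    have e2 : (2:ℚ⟦X⟧) * rescale 2 sinhS = Ee*Ee - Em*Em := by
      rw [← resc2Ee, ← resc2Em, ← map_sub, ← twoS, map_mul]
      congr 1
      rw [two_eq_C, rescale_C]
    calc (4:ℚ⟦X⟧) * (sinhS * rescale 2 Cc - Cc * rescale 2 sinhS + sinhS)
        = (2*sinhS) * (2*rescale 2 Cc) - (2*Cc) * (2*rescale 2 sinhS) + 2*(2*sinhS) := by ring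
      _ = (Ee - Em) * (Ee*Ee + Em*Em) - (Ee + Em) * (Ee*Ee - Em*Em) + 2*(Ee - Em) := by
          rw [twoS, twoC, e1, e2]
      _ = (2*Em - 2*Ee) * (Ee*Em - 1) := by ring
      _ = 0 := by rw [EeEm]; ring
  have h4' : (4:ℚ⟦X⟧) ≠ 0 := by
    intro h
    have := congrArg (constantCoeff (R := ℚ)) h
    simp [map_ofNat] at this
  exact (mul_eq_zero.mp h4).resolve_left h4'


lemma th_X_mul (g : ℚ⟦X⟧) : th (X * g) = X * g + X * th g := by
  ext m
  rcases m with _|m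
  · simp
  · simp only [coeff_th, map_add, coeff_succ_X_mul]
    push_cast; ring

lemma hXhS : X * hS = sinhS := by
  ext m
  rcases m with _|m
  · simp [sinhS]
  · rw [coeff_succ_X_mul]
    rcases Nat.even_or_odd m with h | h
    · simp [hS, sinhS, Nat.even_iff.mp h, Nat.succ_mod_two_eq_one_iff.mpr (Nat.even_iff.mp h)]
    · have h1 : m % 2 = 1 := Nat.odd_iff.mp h
      have h2 : (m+1) % 2 = 0 := by omega
      simp [hS, sinhS, h1, h2]

lemma thsinh : th sinhS = X * Cc := by
  ext m
  rcases m with _|m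
  · simp
  · rw [coeff_th, coeff_succ_X_mul]
    rcases Nat.even_or_odd m with h | h
    · have h0 : m % 2 = 0 := Nat.even_iff.mp h
      have h1 : (m+1) % 2 = 1 := by omega
      simp only [sinhS, Cc, coeff_mk, h0, h1, if_true]
      have hm : ((m+1)! : ℚ) = (m+1) * (m)! := by
        push_cast [Nat.factorial_succ]; ring
      have hne : ((m)! : ℚ) ≠ 0 := by positivity
      rw [hm]
      field_simp
      push_cast; ring
    · have h1 : m % 2 = 1 := Nat.odd_iff.mp h
      have h2 : (m+1) % 2 = 0 := by omega
      simp [sinhS, Cc, h1, h2]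

lemma KI : th (rescale 2 hS) * hS - 2*(th hS * rescale 2 hS)
    = hS * rescale 2 hS - hS := by
  set H := rescale 2 hS with hH
  set S2 := rescale 2 sinhS with hS2
  set C2 := rescale 2 Cc with hC2
  have r2X : rescale 2 (X : ℚ⟦X⟧) = 2 * X := by
    rw [rescale_X, ← two_eq_C]
  have hXH : 2*(X*H) = S2 := by
    rw [hS2, ← hXhS, map_mul, r2X]; ring
  have hXth : X * th hS = X * Cc - sinhS := by
    have := th_X_mul hS
    rw [hXhS, thsinh] at this
    linear_combination -this
  have hXthH : 2*(X * th H) = 2*(X*C2) - S2 := by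
    have h1 : rescale 2 (X * th hS) = 2*(X * th H) := by
      rw [map_mul, r2X, hH, ← th_rescale]; ring
    rw [← h1, hXth, map_sub, map_mul, r2X, ← hC2, ← hS2]; ring
  have h4 : (4:ℚ⟦X⟧)*(X*(X*(th H * hS - 2*(th hS * H) - (hS*H - hS)))) = 0 := by
    calc (4:ℚ⟦X⟧)*(X*(X*(th H * hS - 2*(th hS * H) - (hS*H - hS))))
        = 2*((2*(X*th H))*(X*hS)) - 4*((X*th hS)*(2*(X*H)))
          - 2*((X*hS)*(2*(X*H))) + 4*(X*(X*hS)) := by ring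
      _ = 2*((2*(X*C2) - S2)*sinhS) - 4*((X*Cc - sinhS)*S2)
          - 2*(sinhS*S2) + 4*(X*sinhS) := by rw [hXthH, hXhS, hXth, hXH]
      _ = 4*(X*(sinhS*C2 - Cc*S2 + sinhS)) := by ring
      _ = 0 := by rw [Pkey]; ring
  have h4' : (4:ℚ⟦X⟧) ≠ 0 := by
    intro h
    have := congrArg (constantCoeff (R := ℚ)) h
    simp [map_ofNat] at this
  have hXne : (X:ℚ⟦X⟧) ≠ 0 := X_ne_zero
  have := (mul_eq_zero.mp h4).resolve_left h4'
  have := (mul_eq_zero.mp this).resolve_left hXne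
  have := (mul_eq_zero.mp this).resolve_left hXne
  linear_combination this


lemma c0hS : constantCoeff (R := ℚ) hS = 1 := by
  rw [← coeff_zero_eq_constantCoeff_apply]
  simp [hS]

lemma c0hS_ne : constantCoeff (R := ℚ) hS ≠ 0 := by rw [c0hS]; norm_num

lemma hu : hS * hS⁻¹ = 1 := PowerSeries.mul_inv_cancel _ c0hS_ne

lemma hS_ne : hS ≠ 0 := by
  intro h
  exact c0hS_ne (by rw [h, map_zero])

lemma rel (N : ℕ) : th ((hS⁻¹)^(N+1)) * hS
    + ((N:ℚ⟦X⟧)+1) * ((hS⁻¹)^(N+1) * th hS) = 0 := by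
  have h1 : (hS⁻¹)^(N+1) * hS^(N+1) = 1 := by
    rw [← mul_pow, mul_comm, hu, one_pow]
  have h2 := congrArg th h1
  rw [th_mul, th_pow, th_pow, th_one] at h2
  have hk : (hS * hS⁻¹)^N = 1 := by rw [hu, one_pow]
  rw [th_pow]
  linear_combination (hS⁻¹)^N * h2
    - (((N:ℚ⟦X⟧)+1) * ((hS⁻¹)^N * th hS⁻¹) * hS
        + ((N:ℚ⟦X⟧)+1) * ((hS⁻¹)^(N+1) * th hS)) * hk

lemma Ezero (N : ℕ) :
    ((N:ℚ⟦X⟧)+1) * ((hS⁻¹)^(N+1) * th (rescale 2 hS))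
      + 2 * (th ((hS⁻¹)^(N+1)) * rescale 2 hS)
      - ((N:ℚ⟦X⟧)+1) * ((hS⁻¹)^(N+1) * rescale 2 hS)
      + ((N:ℚ⟦X⟧)+1) * (hS⁻¹)^(N+1) = 0 := by
  set f := (hS⁻¹)^(N+1) with hf
  set H := rescale 2 hS with hH
  set E := ((N:ℚ⟦X⟧)+1) * (f * th H) + 2 * (th f * H)
      - ((N:ℚ⟦X⟧)+1) * (f * H) + ((N:ℚ⟦X⟧)+1) * f with hE
  have hEh : E * hS = 0 := by
    rw [hE]
    linear_combination (((N:ℚ⟦X⟧)+1)*f)*KI + 2*H*(rel N)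
  show E = 0
  linear_combination (-E)*hu + hS⁻¹ * hEh

lemma hSeven : rescale (-1) hS = hS := by
  ext m
  rw [coeff_rescale]
  rcases Nat.even_or_odd m with h | h
  · rw [h.neg_one_pow, one_mul]
  · simp [hS, Nat.odd_iff.mp h]

lemma feven (N : ℕ) : rescale (-1) ((hS⁻¹)^N) = (hS⁻¹)^N := by
  have base : rescale (-1) hS⁻¹ = hS⁻¹ := by
    have h1 : hS * rescale (-1) hS⁻¹ = 1 := by
      have h0 : rescale (-1) (hS * hS⁻¹) = 1 := by rw [hu, map_one]
      rw [map_mul, hSeven] at h0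
      exact h0
    have h2 : hS * hS⁻¹ = 1 := hu
    exact mul_left_cancel₀ hS_ne (h1.trans h2.symm)
  rw [map_pow, base]

lemma fodd (N j : ℕ) : coeff (2*j+1) ((hS⁻¹)^N) = 0 := by
  have h := congrArg (coeff (2*j+1)) (feven N)
  rw [coeff_rescale, (Nat.odd_iff.mpr (by omega) : Odd (2*j+1)).neg_one_pow] at h
  linarith

lemma coeff_H_even (j : ℕ) : coeff (2*j) (rescale 2 hS) = 4^j / ((2*j+1)!) := by
  rw [coeff_rescale]
  have : (2*j) % 2 = 0 := by omega
  simp only [hS, coeff_mk, this, if_true]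
  rw [pow_mul]
  norm_num [div_eq_mul_inv]

lemma coeff_H_odd (j : ℕ) : coeff (2*j+1) (rescale 2 hS) = 0 := by
  rw [coeff_rescale]
  have : (2*j+1) % 2 = 1 := by omega
  simp [hS, this]


lemma sum_range_even (g : ℕ → ℚ) (hg : ∀ j, g (2*j+1) = 0) (k : ℕ) :
    ∑ i ∈ Finset.range (2*k+1), g i = ∑ p ∈ Finset.range (k+1), g (2*p) := by
  induction k with
  | zero => simp
  | succ k ih =>
    have h1 : 2*(k+1)+1 = (2*k+1) + 1 + 1 := by omega
    rw [h1, Finset.sum_range_succ, Finset.sum_range_succ, ih, hg k]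
    have h2 : 2*k+1+1 = 2*(k+1) := by omega
    rw [h2, add_zero]
    exact (Finset.sum_range_succ _ (k+1)).symm

lemma mainrec (N k : ℕ) :
    ∑ p ∈ Finset.range (k+1),
      (coeff (2*p) ((hS⁻¹)^(N+1))) * ((4:ℚ)^(k-p) / ((2*(k-p)+1)! : ℚ))
        * (((N:ℚ)+1) * (2*(k:ℚ) - 2*(p:ℚ)) + 4*(p:ℚ) - ((N:ℚ)+1))
      = -((N:ℚ)+1) * coeff (2*k) ((hS⁻¹)^(N+1)) := by
  set f := (hS⁻¹)^(N+1) with hf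
  set H := rescale 2 hS with hH
  set M := (N:ℚ)+1 with hM
  have hCM : ((N:ℚ⟦X⟧)+1) = C M := by
    rw [hM, map_add, map_one, map_natCast]
  have h0 := congrArg (coeff (2*k)) (Ezero N)
  rw [map_zero, map_add, map_sub, map_add, hCM, two_eq_C, coeff_C_mul,
    coeff_C_mul, coeff_C_mul, coeff_C_mul, coeff_mul, coeff_mul, coeff_mul] at h0
  rw [← hf, ← hH] at h0
  have key : ∑ ab ∈ Finset.HasAntidiagonal.antidiagonal (2*k),
      coeff ab.1 f * coeff ab.2 H * (M * (ab.2:ℚ) + 2*(ab.1:ℚ) - M)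
      = - (M * coeff (2*k) f) := by
    have expand : ∑ ab ∈ Finset.HasAntidiagonal.antidiagonal (2*k),
        coeff ab.1 f * coeff ab.2 H * (M * (ab.2:ℚ) + 2*(ab.1:ℚ) - M)
        = M * (∑ ab ∈ Finset.HasAntidiagonal.antidiagonal (2*k), coeff ab.1 f * coeff ab.2 (th H))
          + 2 * (∑ ab ∈ Finset.HasAntidiagonal.antidiagonal (2*k), coeff ab.1 (th f) * coeff ab.2 H)
          - M * (∑ ab ∈ Finset.HasAntidiagonal.antidiagonal (2*k), coeff ab.1 f * coeff ab.2 H) := by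
      rw [Finset.mul_sum, Finset.mul_sum, Finset.mul_sum, ← Finset.sum_add_distrib,
        ← Finset.sum_sub_distrib]
      refine Finset.sum_congr rfl fun ab _ => ?_
      simp only [coeff_th]
      ring
    rw [expand]
    linear_combination h0
  rw [Finset.Nat.sum_antidiagonal_eq_sum_range_succ_mk] at key
  have hg : ∀ j, coeff (2*j+1) f * coeff (2*k - (2*j+1)) H
      * (M * ((2*k - (2*j+1) : ℕ):ℚ) + 2*((2*j+1:ℕ):ℚ) - M) = 0 := by
    intro j
    rw [hf, fodd]
    ring
  rw [sum_range_even _ hg k] at key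
  dsimp only at key
  calc ∑ p ∈ Finset.range (k+1),
      (coeff (2*p) f) * ((4:ℚ)^(k-p) / ((2*(k-p)+1)! : ℚ))
        * (M * (2*(k:ℚ) - 2*(p:ℚ)) + 4*(p:ℚ) - M)
      = ∑ p ∈ Finset.range (k+1), coeff (2*p) f * coeff (2*k - 2*p) H
        * (M * ((2*k - 2*p : ℕ):ℚ) + 2*((2*p:ℕ):ℚ) - M) := by
        refine Finset.sum_congr rfl fun p hp => ?_
        have hpk : p ≤ k := by
          have := Finset.mem_range.mp hp
          omega
        have e1 : 2*k - 2*p = 2*(k-p) := by omega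
        rw [e1, coeff_H_even]
        have e2 : ((2*(k-p):ℕ):ℚ) = 2*(k:ℚ) - 2*(p:ℚ) := by
          push_cast [Nat.cast_sub hpk]
          ring
        rw [e2]
        push_cast
        ring
    _ = -(M * coeff (2*k) f) := key
    _ = -M * coeff (2*k) f := by ring

end Aux

/-- `y₀ = 2/(2n+1)` and for `k ≥ 1`,
`k y_k = −Σ_{p=0}^{k−1} y_p ((2k+2)!/4)/((2p+2)!(2k−2p+1)!) ((2k−2p−1)(2n−2p+1) + 2p(2k−2p+1))`:
the same coefficients satisfy both recursion relations arising from the two reorderings. -/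
theorem stmt10 (n : ℕ) (hn : 1 ≤ n) :
    ycoef n 0 = 2/(2*(n:ℚ)+1) ∧
    ∀ k : ℕ, 1 ≤ k → (k:ℚ) * ycoef n k =
      - ∑ p ∈ Finset.range k, ycoef n p *
          (((((2*k+2))! : ℚ)/4) / ((((2*p+2))! : ℚ) * (((2*k-2*p+1))! : ℚ))) *
          ((2*(k:ℚ)-2*(p:ℚ)-1) * (2*(n:ℚ)-2*(p:ℚ)+1) + 2*(p:ℚ) * (2*(k:ℚ)-2*(p:ℚ)+1)) := by
  have hMpos : (0:ℚ) < 2*(n:ℚ)+1 := by positivity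
  have hMne : (2*(n:ℚ)+1) ≠ 0 := ne_of_gt hMpos
  have hc0 : ccoef n 0 = 1 := by
    rw [ccoef, coeff_zero_eq_constantCoeff_apply, map_pow, PowerSeries.constantCoeff_inv,
      Aux.c0hS]
    norm_num
  constructor
  · rw [ycoef, hc0]
    norm_num [Nat.factorial]
  · intro k hk
    have K := Aux.mainrec (2*n) k
    push_cast at K
    -- identify coefficients with ccoef
    have K' : ∑ p ∈ Finset.range (k+1),
        ccoef n (2*p) * ((4:ℚ)^(k-p) / ((2*(k-p)+1)! : ℚ))
          * ((2*(n:ℚ)+1) * (2*(k:ℚ) - 2*(p:ℚ)) + 4*(p:ℚ) - (2*(n:ℚ)+1))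
        = -(2*(n:ℚ)+1) * ccoef n (2*k) := by
      convert K using 3 <;> rfl
    rw [Finset.sum_range_succ] at K'
    have hTk : ccoef n (2*k) * ((4:ℚ)^(k-k) / ((2*(k-k)+1)! : ℚ))
          * ((2*(n:ℚ)+1) * (2*(k:ℚ) - 2*(k:ℚ)) + 4*(k:ℚ) - (2*(n:ℚ)+1))
        = ccoef n (2*k) * (4*(k:ℚ) - (2*(n:ℚ)+1)) := by
      simp [Nat.sub_self, Nat.factorial]
    rw [hTk] at K'
    have hsum : ∑ p ∈ Finset.range k,
        ccoef n (2*p) * ((4:ℚ)^(k-p) / ((2*(k-p)+1)! : ℚ))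
          * ((2*(n:ℚ)+1) * (2*(k:ℚ) - 2*(p:ℚ)) + 4*(p:ℚ) - (2*(n:ℚ)+1))
        = -(4*(k:ℚ)) * ccoef n (2*k) := by linear_combination K'
    have hterm : ∀ p ∈ Finset.range k, ycoef n p *
          (((((2*k+2))! : ℚ)/4) / ((((2*p+2))! : ℚ) * (((2*k-2*p+1))! : ℚ))) *
          ((2*(k:ℚ)-2*(p:ℚ)-1) * (2*(n:ℚ)-2*(p:ℚ)+1) + 2*(p:ℚ) * (2*(k:ℚ)-2*(p:ℚ)+1))
        = (((2*k+2)! : ℚ)/(4^(k+1) * (2*(n:ℚ)+1))) *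
          (ccoef n (2*p) * ((4:ℚ)^(k-p) / ((2*(k-p)+1)! : ℚ))
            * ((2*(n:ℚ)+1) * (2*(k:ℚ) - 2*(p:ℚ)) + 4*(p:ℚ) - (2*(n:ℚ)+1))) := by
      intro p hp
      have hpk : p < k := Finset.mem_range.mp hp
      obtain ⟨q, hq⟩ : ∃ q, k = p + q := ⟨k - p, by omega⟩
      subst hq
      rw [ycoef, show p + q - p = q from by omega, show 2*(p+q)-2*p+1 = 2*q+1 from by omega]
      have h1 : ((2*p+2)! : ℚ) ≠ 0 := by positivity
      have h2 : ((2*q+1)! : ℚ) ≠ 0 := by positivity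
      have h3 : (4:ℚ)^p ≠ 0 := by positivity
      push_cast
      field_simp
      ring
    calc (k:ℚ) * ycoef n k
        = (((2*k+2)! : ℚ)/(4^(k+1) * (2*(n:ℚ)+1))) * ((4*(k:ℚ)) * ccoef n (2*k)) := by
          rw [ycoef]
          have h4k : (4:ℚ)^k ≠ 0 := by positivity
          have hf : ((2*k+2)! : ℚ) ≠ 0 := by positivity
          rw [pow_succ]
          field_simp
      _ = - ∑ p ∈ Finset.range k, ycoef n p *
          (((((2*k+2))! : ℚ)/4) / ((((2*p+2))! : ℚ) * (((2*k-2*p+1))! : ℚ))) *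
          ((2*(k:ℚ)-2*(p:ℚ)-1) * (2*(n:ℚ)-2*(p:ℚ)+1) + 2*(p:ℚ) * (2*(k:ℚ)-2*(p:ℚ)+1)) := by
          rw [Finset.sum_congr rfl hterm, ← Finset.mul_sum, hsum]
          ring

end
end

section
/- For every integer n ≥ 1, the coefficient of u^{2n} in the formal power series exp(u) · (u/sinh u)^{2n+1} ∈ ℚ⟦u⟧ is equal to 0. -/
open scoped BigOperators
open Nat

noncomputable section

namespace S12
open PowerSeries

def F : ℚ⟦X⟧ := evalNegHom (exp ℚ)
def Cs : ℚ⟦X⟧ := exp ℚ + F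

lemma coeff_F (n : ℕ) : coeff n F = (-1)^n * (1 / n !) := by
  rw [F, evalNegHom, coeff_rescale, coeff_exp]
  simp

lemma fact_succ_q (n : ℕ) : ((n+1)! : ℚ) = (n+1) * n ! := by
  push_cast [Nat.factorial_succ]; ring

lemma hD_exp : d⁄dX ℚ (exp ℚ) = exp ℚ := by
  ext n
  rw [coeff_derivative, coeff_exp, coeff_exp]
  simp only [eq_ratCast, Rat.cast_eq_id, id_eq]
  rw [fact_succ_q]
  have h1 : ((n:ℚ)+1) ≠ 0 := by positivity
  have h2 : ((n ! : ℚ)) ≠ 0 := by positivity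
  field_simp

lemma hD_F : d⁄dX ℚ F = -F := by
  ext n
  rw [coeff_derivative, coeff_F, map_neg, coeff_F]
  rw [fact_succ_q]
  have h1 : ((n:ℚ)+1) ≠ 0 := by positivity
  have h2 : ((n ! : ℚ)) ≠ 0 := by positivity
  field_simp [pow_succ]
  ring

lemma hSh : exp ℚ - F = 2 * X * hS := by
  have h2 : (2 : ℚ⟦X⟧) * X * hS = X * ((2:ℚ) • hS) := by
    rw [smul_eq_C_mul]
    have : C (2:ℚ) = 2 := by simp [map_ofNat]
    rw [this]; ring
  ext m
  rw [h2]
  cases m with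
  | zero =>
    rw [map_sub, coeff_exp, coeff_F]
    simp
  | succ m =>
    rw [map_sub, coeff_exp, coeff_F, coeff_succ_X_mul, map_smul]
    rw [show (coeff m) hS = (if m % 2 = 0 then (1:ℚ)/(m+1)! else 0) from coeff_mk m _]
    rcases Nat.even_or_odd m with he | ho
    · rw [if_pos (Nat.even_iff.mp he)]
      have hp : (-1 : ℚ)^(m+1) = -1 := by
        rw [pow_succ, he.neg_one_pow]; ring
      rw [hp]; simp; ring
    · rw [if_neg (by rw [Nat.odd_iff.mp ho]; norm_num)]
      have hp : (-1 : ℚ)^(m+1) = 1 := by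
        rw [pow_succ, ho.neg_one_pow]; ring
      rw [hp]; simp

end S12

namespace S12
open PowerSeries

lemma hEF : exp ℚ * F = 1 := exp_mul_exp_neg_eq_one

lemma hCs_sq : Cs^2 = 4 * X^2 * hS^2 + 4 := by
  have h1 := hEF
  have h2 := hSh
  unfold Cs
  linear_combination (exp ℚ - F + 2*X*hS) * h2 + 4 * h1

lemma hHi : hS * hS⁻¹ = 1 := by
  apply PowerSeries.mul_inv_cancel
  rw [← coeff_zero_eq_constantCoeff_apply, hS, coeff_mk]
  norm_num

lemma hD_hS_rel : Cs = 2 * hS + 2 * X * d⁄dX ℚ hS := by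
  have h := congrArg (d⁄dX ℚ) hSh
  rw [map_sub, hD_exp, hD_F, sub_neg_eq_add] at h
  rw [show (2:ℚ⟦X⟧) * X * hS = (2*X) * hS from by ring, Derivation.leibniz, smul_eq_mul,
    smul_eq_mul] at h
  rw [show d⁄dX ℚ (2*X) = 2 from by rw [show (2:ℚ⟦X⟧)*X = X+X from by ring]; simp; norm_num] at h
  unfold Cs
  rw [h]; ring

lemma hD_Hipow (N : ℕ) : d⁄dX ℚ ((hS⁻¹)^N) = -(C (N:ℚ)) * (hS⁻¹)^(N+1) * d⁄dX ℚ hS := by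
  induction N with
  | zero => simp
  | succ n ih =>
    rw [pow_succ, Derivation.leibniz, smul_eq_mul, smul_eq_mul, ih, derivative_inv']
    push_cast [map_add, map_one]
    ring

end S12

namespace S12
open PowerSeries

lemma idA (N : ℕ) :
    2 * X * d⁄dX ℚ (exp ℚ * hS⁻¹^(N+1)) =
      2 * X * (exp ℚ * hS⁻¹^(N+1)) + C (2*((N:ℚ)+1)) * (exp ℚ * hS⁻¹^(N+1))
        - C ((N:ℚ)+1) * (exp ℚ * Cs * hS⁻¹^(N+2)) := by
  rw [Derivation.leibniz, smul_eq_mul, smul_eq_mul, hD_exp, hD_Hipow,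
    Nat.cast_add, Nat.cast_one, map_add, map_one,
    show C (2*((N:ℚ)+1)) = 2*(C (N:ℚ) + 1) from by
      simp [map_mul, map_add, map_one, map_ofNat]]
  linear_combination ((C (N:ℚ) + 1) * exp ℚ * hS⁻¹^(N+2)) * hD_hS_rel
    + (2 * (C (N:ℚ) + 1) * exp ℚ * hS⁻¹^(N+1)) * hHi

lemma hD_Cs : d⁄dX ℚ Cs = 2 * X * hS := by
  unfold Cs
  rw [map_add, hD_exp, hD_F]
  linear_combination hSh

lemma idB (K : ℕ) :
    2 * X * d⁄dX ℚ (exp ℚ * Cs * hS⁻¹^(K+2)) =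
      2 * X * (exp ℚ * Cs * hS⁻¹^(K+2)) + C (2*((K:ℚ)+2)) * (exp ℚ * Cs * hS⁻¹^(K+2))
        - C (4*((K:ℚ)+1)) * (X^2 * (exp ℚ * hS⁻¹^(K+1)))
        - C (4*((K:ℚ)+2)) * (exp ℚ * hS⁻¹^(K+3)) := by
  rw [Derivation.leibniz, smul_eq_mul, smul_eq_mul, hD_Hipow,
    Derivation.leibniz, smul_eq_mul, smul_eq_mul, hD_exp, hD_Cs,
    Nat.cast_add, Nat.cast_ofNat, map_add, map_ofNat,
    show C (2*((K:ℚ)+2)) = 2*(C (K:ℚ) + 2) from by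
      simp [map_mul, map_add, map_ofNat],
    show C (4*((K:ℚ)+1)) = 4*(C (K:ℚ) + 1) from by
      simp [map_mul, map_add, map_one, map_ofNat],
    show C (4*((K:ℚ)+2)) = 4*(C (K:ℚ) + 2) from by
      simp [map_mul, map_add, map_ofNat]]
  linear_combination ((C (K:ℚ) + 2) * exp ℚ * Cs * hS⁻¹^(K+3)) * hD_hS_rel
    - ((C (K:ℚ) + 2) * exp ℚ * hS⁻¹^(K+3)) * hCs_sq
    + (2 * (C (K:ℚ) + 2) * exp ℚ * Cs * hS⁻¹^(K+2)
        - 4*X^2*exp ℚ*hS⁻¹^(K+1)*((C (K:ℚ) + 2) * (hS*hS⁻¹) + (C (K:ℚ) + 1))) * hHi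

end S12

namespace S12
open PowerSeries

def Rr (m : ℕ) : ℚ := coeff m (exp ℚ * hS⁻¹^(m+1))
def Sr (m : ℕ) : ℚ := coeff m (exp ℚ * Cs * hS⁻¹^(m+1))

lemma c2X (n : ℕ) (f : ℚ⟦X⟧) : coeff (n+1) (2*X*f) = 2 * coeff n f := by
  rw [show (2:ℚ⟦X⟧)*X*f = X*f + X*f from by ring, map_add, coeff_succ_X_mul, two_mul]

lemma c2X' (n : ℕ) (f : ℚ⟦X⟧) : coeff (n+2) (2*X*f) = 2 * coeff (n+1) f :=
  c2X (n+1) f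

lemma cX2 (n : ℕ) (f : ℚ⟦X⟧) : coeff (n+2) (X^2*f) = coeff n f := by
  rw [show (X:ℚ⟦X⟧)^2*f = X*(X*f) from by ring, coeff_succ_X_mul, coeff_succ_X_mul]

lemma cder' (n : ℕ) (f : ℚ⟦X⟧) :
    coeff (n+1) (d⁄dX ℚ f) = coeff (n+2) f * ((n:ℚ)+2) := by
  rw [coeff_derivative]
  rw [show n+1+1 = n+2 from rfl]
  push_cast
  ring

lemma rel1 (N : ℕ) : 2 * Rr N = ((N:ℚ)+1) * Sr (N+1) := by
  have h := congrArg (coeff (R := ℚ) (N+1)) (idA N)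
  rw [map_sub, map_add, c2X, c2X, coeff_C_mul, coeff_C_mul, coeff_derivative] at h
  unfold Rr Sr
  rw [show N+1+1 = N+2 from rfl]
  linear_combination -h

lemma rel2 (K : ℕ) : 2 * Sr (K+1) = 4*((K:ℚ)+1) * Rr K + 4*((K:ℚ)+2) * Rr (K+2) := by
  have h := congrArg (coeff (R := ℚ) (K+2)) (idB K)
  rw [map_sub, map_sub, map_add, c2X', c2X', coeff_C_mul, coeff_C_mul, coeff_C_mul,
    cder', cX2] at h
  unfold Rr Sr
  rw [show K+1+1 = K+2 from rfl, show K+2+1 = K+3 from rfl]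
  linear_combination -h

lemma key (K : ℕ) : ((K:ℚ)+1)*((K:ℚ)+2) * Rr (K+2) = -(K:ℚ)*((K:ℚ)+2) * Rr K := by
  have h1 := rel1 K
  have h2 := rel2 K
  linear_combination (-(((K:ℚ)+1)/4)) * h2 + (-(1:ℚ)/2) * h1

lemma Rmain (k : ℕ) : Rr (2*k+2) = 0 := by
  induction k with
  | zero =>
    have h := key 0
    norm_num at h
    simpa using h
  | succ n ih =>
    have h := key (2*n+2)
    rw [ih, mul_zero] at h
    rw [show 2*(n+1)+2 = 2*n+2+2 from by ring]
    have h5 : (((2*n+2:ℕ):ℚ)+1)*(((2*n+2:ℕ):ℚ)+2) ≠ 0 := by positivity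
    exact (mul_eq_zero.mp h).resolve_left h5

end S12


/-- The coefficient of `u^{2n}` in `exp(u)·(u/sinh u)^{2n+1}` vanishes. -/
theorem stmt12 (n : ℕ) (hn : 1 ≤ n) :
    PowerSeries.coeff (R := ℚ) (2*n) (PowerSeries.exp ℚ * (hS⁻¹)^(2*n+1)) = 0 := by
  obtain ⟨k, rfl⟩ := Nat.exists_eq_add_of_le hn
  rw [show 2*(1+k) = 2*k+2 from by ring]
  exact S12.Rmain k

end
end
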